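/- For all integers k ≥ 1 and s ≥ 1 there exist polynomials P₁,…,P_s ∈ ℝ[X₁,…,X_k], each of total degree at most 1, such that the number of realizable sign conditions of the family P₁,…,P_s equals Σ_{i=0}^{k} Σ_{j=0}^{k−i} C(s, i)·C(s−i, j), where C(n, m) denotes the binomial coefficient. -/

import Mathlib

/-- The realization of the sign condition `σ` for the family of polynomials `P`. -/
def SignRealization {k s : ℕ} (P : Fin s → MvPolynomial (Fin k) ℝ)
    (σ : Fin s → SignType) : Set (Fin k → ℝ) :=
  {x | ∀ i, SignType.sign (MvPolynomial.eval x (P i)) = σ i}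

open Polynomial Finset

namespace Stmt6Aux

def bsign : Bool → SignType := fun b => if b then 1 else -1

@[simp] lemma bsign_true : bsign true = 1 := rfl
@[simp] lemma bsign_false : bsign false = -1 := rfl

lemma bsign_ne_zero (b : Bool) : bsign b ≠ 0 := by cases b <;> simp [bsign]

/-- extension of `π` by `true` beyond `m` -/
def px {m : ℕ} (π : Fin m → Bool) (n : ℕ) : Bool := if h : n < m then π ⟨n, h⟩ else true

/-- set of change positions (with sentinel `true` at the right end) -/
def chg {m : ℕ} (π : Fin m → Bool) : Finset ℕ :=
  (Finset.range m).filter fun n => px π n ≠ px π (n+1)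

lemma filter_le_card (S : Finset ℕ) (n : ℕ) :
    (S.filter (n ≤ ·)).card = (S.filter (n+1 ≤ ·)).card + (if n ∈ S then 1 else 0) := by
  classical
  have h : S.filter (n ≤ ·) = (S.filter (n+1 ≤ ·)) ∪ (S.filter (· = n)) := by
    ext x
    simp only [Finset.mem_union, Finset.mem_filter]
    constructor
    · rintro ⟨hx, hnx⟩
      rcases eq_or_lt_of_le hnx with h | h
      · exact Or.inr ⟨hx, h.symm⟩
      · exact Or.inl ⟨hx, h⟩
    · rintro (⟨hx, hnx⟩ | ⟨hx, rfl⟩)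
      · exact ⟨hx, le_trans (Nat.le_succ n) hnx⟩
      · exact ⟨hx, le_refl x⟩
  have hd : Disjoint (S.filter (n+1 ≤ ·)) (S.filter (· = n)) := by
    rw [Finset.disjoint_left]
    intro x hx1 hx2
    simp only [Finset.mem_filter] at hx1 hx2
    omega
  rw [h, Finset.card_union_of_disjoint hd]
  congr 1
  by_cases hn : n ∈ S
  · rw [if_pos hn]
    rw [Finset.filter_eq' S n, if_pos hn, Finset.card_singleton]
  · rw [if_neg hn]
    rw [Finset.filter_eq' S n, if_neg hn, Finset.card_empty]

end Stmt6Aux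

namespace Stmt6Aux

lemma chg_subset_range {m : ℕ} (π : Fin m → Bool) : chg π ⊆ Finset.range m :=
  Finset.filter_subset _ _

lemma px_parity {m : ℕ} (π : Fin m → Bool) :
    ∀ t n, n + t = m → px π n = decide (Even (((chg π).filter (n ≤ ·)).card)) := by
  intro t
  induction t with
  | zero =>
    intro n hn
    have h1 : (chg π).filter (n ≤ ·) = ∅ := by
      apply Finset.filter_false_of_mem
      intro x hx
      have := Finset.mem_range.1 (chg_subset_range π hx)
      omega
    rw [h1]
    simp [px, hn]; omega
  | succ t ih =>
    intro n hn
    have ihn := ih (n+1) (by omega)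
    have hc := filter_le_card (chg π) n
    have hnm : n < m := by omega
    by_cases hmem : n ∈ chg π
    · have hne : px π n ≠ px π (n+1) := by
        have := (Finset.mem_filter.1 hmem).2
        exact this
      rw [if_pos hmem] at hc
      rw [hc]
      rcases Nat.even_or_odd ((chg π).filter (n+1 ≤ ·)).card with he | ho
      · have h2 : ¬ Even (((chg π).filter (n+1 ≤ ·)).card + 1) := by
          rw [Nat.even_add_one, not_not]; exact he
        rw [decide_eq_true (by exact he)] at ihn
        rw [decide_eq_false h2]
        cases h : px π n
        · rfl
        · exfalso; apply hne; rw [h, ihn]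
      · have h2 : Even (((chg π).filter (n+1 ≤ ·)).card + 1) := by
          rw [Nat.even_add_one, Nat.not_even_iff_odd]; exact ho
        rw [decide_eq_false (by simpa [Nat.not_even_iff_odd] using ho)] at ihn
        rw [decide_eq_true h2]
        cases h : px π n
        · exfalso; apply hne; rw [h, ihn]
        · rfl
    · have heq : px π n = px π (n+1) := by
        by_contra hne
        exact hmem (Finset.mem_filter.2 ⟨Finset.mem_range.2 hnm, hne⟩)
      rw [if_neg hmem, add_zero] at hc
      rw [hc, heq, ihn]

lemma px_eq_parity {m : ℕ} (π : Fin m → Bool) (n : ℕ) (hn : n ≤ m) :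
    px π n = decide (Even (((chg π).filter (n ≤ ·)).card)) :=
  px_parity π (m - n) n (by omega)

/-- the sequence attached to a change set -/
def seqOf {m : ℕ} (S : Finset ℕ) : Fin m → Bool :=
  fun j => decide (Even ((S.filter ((j : ℕ) ≤ ·)).card))

lemma chg_seqOf {m : ℕ} (S : Finset ℕ) (hS : S ⊆ Finset.range m) :
    chg (seqOf (m := m) S) = S := by
  classical
  have hpx : ∀ n, n ≤ m → px (seqOf (m := m) S) n = decide (Even ((S.filter (n ≤ ·)).card)) := by
    intro n hn
    rcases lt_or_eq_of_le hn with h | h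
    · simp [px, h, seqOf]
    · subst h
      have h1 : S.filter (n ≤ ·) = ∅ := by
        apply Finset.filter_false_of_mem
        intro x hx
        have := Finset.mem_range.1 (hS hx)
        omega
      simp [px, h1]
  ext x
  simp only [chg, Finset.mem_filter, Finset.mem_range]
  constructor
  · rintro ⟨hx, hne⟩
    rw [hpx x (le_of_lt hx), hpx (x+1) hx] at hne
    by_contra hmem
    have hc := filter_le_card S x
    rw [if_neg hmem, add_zero] at hc
    rw [hc] at hne
    exact hne rfl
  · intro hx
    have hxm : x < m := Finset.mem_range.1 (hS hx)
    refine ⟨hxm, ?_⟩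
    rw [hpx x (le_of_lt hxm), hpx (x+1) hxm]
    have hc := filter_le_card S x
    rw [if_pos hx] at hc
    rw [hc]
    simp only [ne_eq, decide_eq_decide, Nat.even_add_one]
    tauto

end Stmt6Aux

namespace Stmt6Aux

lemma px_of_lt {m : ℕ} (π : Fin m → Bool) (j : Fin m) : px π (j : ℕ) = π j := by
  simp [px, j.isLt]

lemma chg_injective {m : ℕ} : Function.Injective (chg (m := m)) := by
  intro π π' h
  funext j
  have h1 := px_eq_parity π (j : ℕ) (le_of_lt j.isLt)
  have h2 := px_eq_parity π' (j : ℕ) (le_of_lt j.isLt)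
  rw [px_of_lt] at h1 h2
  rw [h1, h2, h]

lemma card_chg_le (m d : ℕ) :
    Nat.card {π : Fin m → Bool // (chg π).card ≤ d}
      = ∑ j ∈ Finset.range (d+1), m.choose j := by
  classical
  rw [Nat.card_eq_fintype_card, Fintype.card_subtype]
  have hbij : (Finset.univ.filter fun π : Fin m → Bool => (chg π).card ≤ d).card
      = (((Finset.range m).powerset).filter fun S => S.card ≤ d).card := by
    apply Finset.card_bij (fun π _ => chg π)
    · intro π hπ
      simp only [Finset.mem_filter, Finset.mem_powerset] at *
      exact ⟨chg_subset_range π, hπ.2⟩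
    · intro π _ π' _ h
      exact chg_injective h
    · intro S hS
      simp only [Finset.mem_filter, Finset.mem_powerset] at hS
      refine ⟨seqOf S, ?_, chg_seqOf S hS.1⟩
      simp only [Finset.mem_filter, Finset.mem_univ, true_and]
      rw [chg_seqOf S hS.1]
      exact hS.2
  rw [hbij]
  rw [Finset.card_eq_sum_card_fiberwise
    (f := fun S : Finset ℕ => S.card) (t := Finset.range (d+1))
    (by intro S hS; simp only [Finset.mem_coe, Finset.mem_filter] at hS
        simp only [Finset.mem_coe, Finset.mem_range]; omega)]
  apply Finset.sum_congr rfl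
  intro j hj
  have hj' : j ≤ d := by have := Finset.mem_range.1 hj; omega
  have : (Finset.powersetCard j (Finset.range m)).card = m.choose j := by
    rw [Finset.card_powersetCard, Finset.card_range]
  rw [← this]
  congr 1
  ext S
  simp only [Finset.mem_filter, Finset.mem_powerset, Finset.mem_powersetCard]
  constructor
  · rintro ⟨⟨h1, _⟩, h3⟩
    exact ⟨h1, h3⟩
  · rintro ⟨h1, h2⟩
    refine ⟨⟨h1, ?_⟩, h2⟩
    rw [h2]; exact hj'

end Stmt6Aux

namespace Stmt6Aux

/-- extension of the point sequence -/
noncomputable def U {m : ℕ} (u : Fin m → ℝ) (n : ℕ) : ℝ := if h : n < m then u ⟨n, h⟩ else 0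

lemma L1_nec {m d : ℕ} {u : Fin m → ℝ} (hu : StrictMono u) {π : Fin m → Bool}
    {q : Polynomial ℝ} (hmo : q.Monic) (hdeg : q.natDegree = d)
    (hsgn : ∀ j, SignType.sign (q.eval (u j)) = bsign (π j)) :
    (chg π).card ≤ d := by
  classical
  have hq0 : q ≠ 0 := hmo.ne_zero
  have key : ∀ n ∈ chg π, ∃ r : ℝ, q.IsRoot r ∧ U u n < r ∧ (n+1 < m → r < U u (n+1)) := by
    intro n hn
    have hnm : n < m := Finset.mem_range.1 (chg_subset_range π hn)
    have hne : px π n ≠ px π (n+1) := (Finset.mem_filter.1 hn).2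
    by_cases h1 : n + 1 < m
    · -- interior change
      have hne' : π ⟨n, hnm⟩ ≠ π ⟨n+1, h1⟩ := by
        simpa [px, hnm, h1] using hne
      have hUlt : U u n < U u (n+1) := by
        simp only [U, dif_pos hnm, dif_pos h1]
        exact hu (by simp [Fin.lt_def])
      have hUn : U u n = u ⟨n, hnm⟩ := by simp [U, hnm]
      have hUn1 : U u (n+1) = u ⟨n+1, h1⟩ := by simp [U, h1]
      cases hb : π ⟨n, hnm⟩ with
      | true =>
        have hb' : π ⟨n+1, h1⟩ = false := by
          cases hb2 : π ⟨n+1, h1⟩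
          · rfl
          · exact absurd (hb.trans hb2.symm) hne'
        have hq1 : 0 < q.eval (U u n) := by
          rw [hUn]; exact sign_eq_one_iff.1 (by rw [hsgn ⟨n, hnm⟩, hb]; rfl)
        have hq2 : q.eval (U u (n+1)) < 0 := by
          rw [hUn1]; exact sign_eq_neg_one_iff.1 (by rw [hsgn ⟨n+1, h1⟩, hb']; rfl)
        have := intermediate_value_Ioo' (le_of_lt hUlt) q.continuous.continuousOn
          (show (0:ℝ) ∈ Set.Ioo (q.eval (U u (n+1))) (q.eval (U u n)) from ⟨hq2, hq1⟩)
        obtain ⟨r, hr, hr0⟩ := this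
        exact ⟨r, hr0, hr.1, fun _ => hr.2⟩
      | false =>
        have hb' : π ⟨n+1, h1⟩ = true := by
          cases hb2 : π ⟨n+1, h1⟩
          · exact absurd (hb.trans hb2.symm) hne'
          · rfl
        have hq1 : q.eval (U u n) < 0 := by
          rw [hUn]; exact sign_eq_neg_one_iff.1 (by rw [hsgn ⟨n, hnm⟩, hb]; rfl)
        have hq2 : 0 < q.eval (U u (n+1)) := by
          rw [hUn1]; exact sign_eq_one_iff.1 (by rw [hsgn ⟨n+1, h1⟩, hb']; rfl)
        obtain ⟨r, hr, hr0⟩ := intermediate_value_Ioo (le_of_lt hUlt) q.continuous.continuousOn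
          (show (0:ℝ) ∈ Set.Ioo (q.eval (U u n)) (q.eval (U u (n+1))) from ⟨hq1, hq2⟩)
        exact ⟨r, hr0, hr.1, fun _ => hr.2⟩
    · -- last position: sentinel is true, so π at n is false
      have hfalse : π ⟨n, hnm⟩ = false := by
        have : px π (n+1) = true := by simp [px, h1]
        cases hb : π ⟨n, hnm⟩
        · rfl
        · exfalso; apply hne; rw [this]; simpa [px, hnm] using hb
      have hq1 : q.eval (U u n) < 0 := by
        have : U u n = u ⟨n, hnm⟩ := by simp [U, hnm]
        rw [this]; exact sign_eq_neg_one_iff.1 (by rw [hsgn ⟨n, hnm⟩, hfalse]; rfl)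
      have hdp : 0 < q.natDegree := by
        rcases Nat.eq_zero_or_pos q.natDegree with h0 | h
        · exfalso
          have : q = 1 := hmo.natDegree_eq_zero.1 h0
          rw [this] at hq1; simp at hq1; linarith
        · exact h
      have htt : Filter.Tendsto (fun x => q.eval x) Filter.atTop Filter.atTop :=
        q.tendsto_atTop_of_leadingCoeff_nonneg (natDegree_pos_iff_degree_pos.1 hdp)
          (by rw [hmo.leadingCoeff]; norm_num)
      obtain ⟨b, hb0, hbn⟩ :=
        ((htt.eventually_gt_atTop 0).and (Filter.eventually_gt_atTop (U u n))).exists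
      obtain ⟨r, hr, hr0⟩ := intermediate_value_Ioo (le_of_lt hbn) q.continuous.continuousOn
        (show (0:ℝ) ∈ Set.Ioo (q.eval (U u n)) (q.eval b) from ⟨hq1, hb0⟩)
      exact ⟨r, hr0, hr.1, fun h => absurd h h1⟩
  choose! ρ hroot hlow hhigh using key
  have hinj : Set.InjOn ρ (chg π) := by
    intro a ha b hb hab
    by_contra hne
    have hUmono : ∀ x y, x < y → y < m → U u x < U u y := by
      intro x y hxy hym
      simp only [U, dif_pos (lt_trans hxy hym), dif_pos hym]
      exact hu (by simp [Fin.lt_def]; omega)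
    rcases lt_trichotomy a b with h | h | h
    · have hbm : b < m := Finset.mem_range.1 (chg_subset_range π hb)
      have h1 : a + 1 < m := by omega
      have : ρ a < ρ b := by
        calc ρ a < U u (a+1) := hhigh a ha h1
        _ ≤ U u b := by rcases Nat.eq_or_lt_of_le (Nat.succ_le_of_lt h) with h2 | h2
                        · rw [show a + 1 = b from h2]
                        · exact le_of_lt (hUmono _ _ h2 hbm)
        _ < ρ b := hlow b hb
      rw [hab] at this; exact lt_irrefl _ this
    · exact hne h
    · have ham : a < m := Finset.mem_range.1 (chg_subset_range π ha)
      have h1 : b + 1 < m := by omega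
      have : ρ b < ρ a := by
        calc ρ b < U u (b+1) := hhigh b hb h1
        _ ≤ U u a := by rcases Nat.eq_or_lt_of_le (Nat.succ_le_of_lt h) with h2 | h2
                        · rw [show b + 1 = a from h2]
                        · exact le_of_lt (hUmono _ _ h2 ham)
        _ < ρ a := hlow a ha
      rw [hab] at this; exact lt_irrefl _ this
  have hmaps : ∀ n ∈ chg π, ρ n ∈ q.roots.toFinset := by
    intro n hn
    rw [Multiset.mem_toFinset, Polynomial.mem_roots hq0]
    exact hroot n hn
  calc (chg π).card ≤ q.roots.toFinset.card := Finset.card_le_card_of_injOn ρ hmaps hinj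
    _ ≤ Multiset.card q.roots := q.roots.toFinset_card_le
    _ ≤ q.natDegree := q.card_roots'
    _ = d := hdeg

end Stmt6Aux

namespace Stmt6Aux

lemma L1_suf {m d : ℕ} {u : Fin m → ℝ} (hu : StrictMono u) {π : Fin m → Bool}
    (hN : (chg π).card ≤ d) :
    ∃ q : Polynomial ℝ, q.Monic ∧ q.natDegree = d ∧
      ∀ j, SignType.sign (q.eval (u j)) = bsign (π j) := by
  classical
  rcases Nat.eq_zero_or_pos m with hm0 | hm0
  · refine ⟨X ^ d, monic_X_pow d, natDegree_X_pow d, fun j => ?_⟩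
    exact absurd j.isLt (by omega)
  -- construction
  set c : ℕ → ℝ := fun n => if n+1 < m then (U u n + U u (n+1))/2 else U u n + 1 with hc
  set B : ℝ := U u 0 - 1 with hB
  set N : ℕ := (chg π).card with hNdef
  set q : Polynomial ℝ := (∏ n ∈ chg π, (X - C (c n))) * (X - C B)^(d - N) with hq
  have hmon : q.Monic := by
    apply Polynomial.Monic.mul
    · exact monic_prod_of_monic _ _ fun n _ => monic_X_sub_C _
    · exact (monic_X_sub_C B).pow _
  have hdeg : q.natDegree = d := by
    rw [hq, Polynomial.natDegree_mul, Polynomial.natDegree_pow, Polynomial.natDegree_X_sub_C,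
      Polynomial.natDegree_prod]
    · simp only [Polynomial.natDegree_X_sub_C]
      rw [Finset.sum_const, smul_eq_mul, mul_one]
      omega
    · intro n _; exact Polynomial.X_sub_C_ne_zero _
    · exact (monic_prod_of_monic _ _ fun n _ => monic_X_sub_C _).ne_zero
    · exact ((monic_X_sub_C B).pow _).ne_zero
  refine ⟨q, hmon, hdeg, fun j => ?_⟩
  -- evaluate
  have heval : q.eval (u j) =
      (∏ n ∈ chg π, (u j - c n)) * (u j - B)^(d - N) := by
    simp [hq, Polynomial.eval_prod]
  -- B is below all points
  have hB_lt : 0 < u j - B := by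
    have h0 : U u 0 = u ⟨0, hm0⟩ := by simp [U, hm0]
    have : u ⟨0, hm0⟩ ≤ u j := hu.monotone (by simp [Fin.le_def])
    rw [hB, h0]; linarith
  -- split the product
  have hsplit : (∏ n ∈ chg π, (u j - c n)) =
      (∏ n ∈ (chg π).filter ((j:ℕ) ≤ ·), (u j - c n)) *
      (∏ n ∈ (chg π).filter (fun n => ¬ ((j:ℕ) ≤ n)), (u j - c n)) :=
    (Finset.prod_filter_mul_prod_filter_not (chg π) _ _).symm
  have hUj : U u (j:ℕ) = u j := by simp [U, j.isLt]
  have hfact2 : ∀ n ∈ (chg π).filter ((j:ℕ) ≤ ·), 0 < c n - u j := by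
    intro n hn
    obtain ⟨hn1, hn2⟩ := Finset.mem_filter.1 hn
    have hnm : n < m := Finset.mem_range.1 (chg_subset_range π hn1)
    have hUn : u j ≤ U u n := by
      rw [← hUj]
      rcases Nat.eq_or_lt_of_le hn2 with h | h
      · rw [h]
      · simp only [U, dif_pos j.isLt, dif_pos hnm]
        exact le_of_lt (hu (by simp [Fin.lt_def]; omega))
    have : U u n < c n := by
      by_cases h1 : n + 1 < m
      · have hceq : c n = (U u n + U u (n+1))/2 := by simp [hc, h1]
        have hlt : U u n < U u (n+1) := by
          simp only [U, dif_pos hnm, dif_pos h1]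
          exact hu (by simp [Fin.lt_def])
        rw [hceq]; linarith
      · have hceq : c n = U u n + 1 := by simp [hc, h1]
        rw [hceq]; linarith
    linarith
  have hfact1 : ∀ n ∈ (chg π).filter (fun n => ¬ ((j:ℕ) ≤ n)), 0 < u j - c n := by
    intro n hn
    obtain ⟨hn1, hn2⟩ := Finset.mem_filter.1 hn
    push_neg at hn2
    have hnm : n < m := Finset.mem_range.1 (chg_subset_range π hn1)
    have h1 : n + 1 < m := by
      have := j.isLt; omega
    have hcn : c n < U u (n+1) := by
      have hceq : c n = (U u n + U u (n+1))/2 := by simp [hc, h1]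
      have hlt : U u n < U u (n+1) := by
        simp only [U, dif_pos hnm, dif_pos h1]
        exact hu (by simp [Fin.lt_def])
      rw [hceq]; linarith
    have : U u (n+1) ≤ u j := by
      rw [← hUj]
      rcases Nat.eq_or_lt_of_le (Nat.succ_le_of_lt hn2) with h | h
      · rw [show n + 1 = (j:ℕ) from h]
      · simp only [U, dif_pos h1, dif_pos j.isLt]
        exact le_of_lt (hu (by simp [Fin.lt_def]; omega))
    linarith
  -- rewrite the negative part
  set t : ℕ := ((chg π).filter ((j:ℕ) ≤ ·)).card with ht
  have hnegprod : (∏ n ∈ (chg π).filter ((j:ℕ) ≤ ·), (u j - c n)) =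
      (-1)^t * (∏ n ∈ (chg π).filter ((j:ℕ) ≤ ·), (c n - u j)) := by
    rw [ht, ← Finset.prod_const, ← Finset.prod_mul_distrib]
    apply Finset.prod_congr rfl
    intro n _; ring
  have hpos2 : 0 < (∏ n ∈ (chg π).filter ((j:ℕ) ≤ ·), (c n - u j)) :=
    Finset.prod_pos hfact2
  have hpos1 : 0 < (∏ n ∈ (chg π).filter (fun n => ¬ ((j:ℕ) ≤ n)), (u j - c n)) :=
    Finset.prod_pos hfact1
  have hpow : 0 < (u j - B)^(d - N) := pow_pos hB_lt _
  have hπ : π j = decide (Even t) := by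
    have := px_eq_parity π (j:ℕ) (le_of_lt j.isLt)
    rw [px_of_lt] at this
    exact this
  rcases Nat.even_or_odd t with he | ho
  · have : 0 < q.eval (u j) := by
      rw [heval, hsplit, hnegprod, he.neg_one_pow, one_mul]
      exact mul_pos (mul_pos hpos2 hpos1) hpow
    rw [sign_pos this, hπ, decide_eq_true he]
    rfl
  · have : q.eval (u j) < 0 := by
      rw [heval, hsplit, hnegprod, ho.neg_one_pow]
      have h := mul_pos (mul_pos hpos2 hpos1) hpow
      nlinarith [h]
    rw [sign_neg this, hπ, decide_eq_false (by simpa [Nat.not_even_iff_odd] using ho)]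
    rfl

end Stmt6Aux

namespace Stmt6Aux

lemma bsign_mul_beq (e : Bool) (x : SignType) (hx : x ≠ 0) :
    bsign e * bsign (e == decide (x = 1)) = x := by
  cases e <;> cases x <;> first | rfl | (exact absurd rfl hx) | decide

lemma bsign_cancel {e : Bool} {x y : SignType} (h : bsign e * x = bsign e * y) : x = y := by
  cases e <;> cases x <;> cases y <;> first | rfl | (exact absurd h (by decide))

lemma bsign_mul_ne_zero (e r : Bool) : bsign e * bsign r ≠ 0 := by
  cases e <;> cases r <;> decide

lemma beq_bsign_mul (e r : Bool) : (e == decide (bsign e * bsign r = 1)) = r := by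
  cases e <;> cases r <;> decide

lemma beq_cancel {a b c : Bool} (h : (a == b) = (a == c)) : b = c := by
  cases a <;> cases b <;> cases c <;> simp_all

lemma signtype_eq_of_decide {x y : SignType} (hx : x ≠ 0) (hy : y ≠ 0)
    (h : decide (x = 1) = decide (y = 1)) : x = y := by
  cases x <;> cases y <;> simp_all

/-- the evaluation points -/
noncomputable def w (s : ℕ) : Fin s → ℝ := fun i => ((i : ℕ) : ℝ)

lemma w_strictMono {s : ℕ} : StrictMono (w s) := by
  intro a b hab
  have h : (a : ℕ) < (b : ℕ) := hab
  simp only [w]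
  exact_mod_cast h

/-- realizability by a monic polynomial of degree `d` -/
def Mreal {m : ℕ} (d : ℕ) (u : Fin m → ℝ) (τ : Fin m → SignType) : Prop :=
  ∃ q : Polynomial ℝ, q.Monic ∧ q.natDegree = d ∧
    ∀ j, SignType.sign (q.eval (u j)) = τ j

section Fiber

variable {s : ℕ} (A : Finset (Fin s))

noncomputable def pA : Polynomial ℝ := ∏ a ∈ A, (X - C ((a : ℕ) : ℝ))

noncomputable def oA : Fin (Aᶜ.card) ≃o {x // x ∈ Aᶜ} := Aᶜ.orderIsoOfFin rfl

noncomputable def vA : Fin (Aᶜ.card) → ℝ := fun j => (((oA A j : Fin s) : ℕ) : ℝ)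

noncomputable def epsA : Fin (Aᶜ.card) → Bool := fun j => decide (0 < (pA A).eval (vA A j))

noncomputable def PhiA (σ : Fin s → SignType) : Fin (Aᶜ.card) → Bool :=
  fun j => (epsA A j == decide (σ (oA A j) = 1))

lemma pA_monic : (pA A).Monic := monic_prod_of_monic _ _ fun _ _ => monic_X_sub_C _

lemma pA_natDegree : (pA A).natDegree = A.card := by
  rw [pA, Polynomial.natDegree_prod _ _ (fun a _ => Polynomial.X_sub_C_ne_zero _)]
  simp only [Polynomial.natDegree_X_sub_C]
  rw [Finset.sum_const, smul_eq_mul, mul_one]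

lemma vA_eq_w (j : Fin (Aᶜ.card)) : vA A j = w s (oA A j) := rfl

lemma vA_strictMono : StrictMono (vA A) := by
  intro a b hab
  have h1 : (oA A a : Fin s) < (oA A b : Fin s) := Subtype.coe_lt_coe.2 ((oA A).strictMono hab)
  have h2 : ((oA A a : Fin s) : ℕ) < ((oA A b : Fin s) : ℕ) := h1
  simp only [vA]
  exact_mod_cast h2

lemma oA_not_mem (j : Fin (Aᶜ.card)) : (oA A j : Fin s) ∉ A :=
  Finset.mem_compl.1 (oA A j).2

lemma pA_eval_ne_zero (j : Fin (Aᶜ.card)) : (pA A).eval (vA A j) ≠ 0 := by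
  rw [pA, Polynomial.eval_prod]
  rw [Finset.prod_ne_zero_iff]
  intro a ha
  simp only [Polynomial.eval_sub, Polynomial.eval_X, Polynomial.eval_C]
  intro h
  have hv : vA A j = ((a : ℕ) : ℝ) := by linarith
  simp only [vA] at hv
  have : ((oA A j : Fin s) : ℕ) = (a : ℕ) := by exact_mod_cast hv
  have : (oA A j : Fin s) = a := Fin.ext this
  exact oA_not_mem A j (this ▸ ha)

lemma sign_pA_eval (j : Fin (Aᶜ.card)) :
    SignType.sign ((pA A).eval (vA A j)) = bsign (epsA A j) := by
  rcases lt_or_gt_of_ne (pA_eval_ne_zero A j) with h | h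
  · rw [sign_neg h, epsA, decide_eq_false (by linarith)]
    rfl
  · rw [sign_pos h, epsA, decide_eq_true h]
    rfl

end Fiber

end Stmt6Aux

namespace Stmt6Aux

section Fiber2

variable {s : ℕ} (k : ℕ) (A : Finset (Fin s))

lemma fiber_iff (σ : Fin s → SignType) (hz : ∀ i : Fin s, σ i = 0 ↔ i ∈ A) :
    Mreal k (w s) σ ↔ (A.card ≤ k ∧ (chg (PhiA A σ)).card ≤ k - A.card) := by
  constructor
  · rintro ⟨q, hmo, hdeg, hsgn⟩
    have hq0 : q ≠ 0 := hmo.ne_zero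
    -- p_A divides q
    have hdvd : pA A ∣ q := by
      apply Finset.prod_dvd_of_coprime
      · intro a ha b hb hab
        apply isCoprime_X_sub_C_of_isUnit_sub
        apply IsUnit.mk0
        rw [sub_ne_zero]
        intro h
        exact hab (Fin.ext (by exact_mod_cast h))
      · intro a ha
        rw [Polynomial.dvd_iff_isRoot, Polynomial.IsRoot.def]
        have : SignType.sign (q.eval (w s a)) = 0 := by rw [hsgn a, (hz a).2 ha]
        exact sign_eq_zero_iff.1 this
    obtain ⟨r, hqr⟩ := hdvd
    have hr0 : r ≠ 0 := by
      intro h; rw [h, mul_zero] at hqr; exact hq0 hqr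
    have hrmo : r.Monic := (pA_monic A).of_mul_monic_left (hqr ▸ hmo)
    have hdeg' : q.natDegree = A.card + r.natDegree := by
      rw [hqr, Polynomial.natDegree_mul (pA_monic A).ne_zero hr0, pA_natDegree]
    have hAk : A.card ≤ k := by omega
    have hrdeg : r.natDegree = k - A.card := by omega
    -- sign of r at the complement points
    have hsr : ∀ j, SignType.sign (r.eval (vA A j)) = bsign (PhiA A σ j) := by
      intro j
      have h1 : SignType.sign (q.eval (vA A j)) = σ (oA A j) := by
        rw [vA_eq_w]; exact hsgn _
      have h2 : SignType.sign (q.eval (vA A j))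
          = bsign (epsA A j) * SignType.sign (r.eval (vA A j)) := by
        rw [hqr, Polynomial.eval_mul, sign_mul, sign_pA_eval]
      have hne : σ (oA A j) ≠ 0 := fun h => oA_not_mem A j ((hz _).1 h)
      have h3 : bsign (epsA A j) * SignType.sign (r.eval (vA A j))
          = bsign (epsA A j) * bsign (PhiA A σ j) := by
        rw [← h2, h1, PhiA, bsign_mul_beq _ _ hne]
      exact bsign_cancel h3
    refine ⟨hAk, ?_⟩
    have := L1_nec (vA_strictMono A) hrmo hrdeg hsr
    exact this
  · rintro ⟨hAk, hchg⟩
    obtain ⟨r, hrmo, hrdeg, hsr⟩ := L1_suf (vA_strictMono A) hchg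
    refine ⟨pA A * r, (pA_monic A).mul hrmo, ?_, ?_⟩
    · rw [Polynomial.natDegree_mul (pA_monic A).ne_zero hrmo.ne_zero, pA_natDegree, hrdeg]
      omega
    · intro i
      by_cases hi : i ∈ A
      · have : (pA A).eval (w s i) = 0 := by
          rw [pA, Polynomial.eval_prod]
          apply Finset.prod_eq_zero hi
          simp [w]
        rw [Polynomial.eval_mul, this, zero_mul, sign_zero]
        exact ((hz i).2 hi).symm
      · have hic : i ∈ Aᶜ := Finset.mem_compl.2 hi
        set j : Fin (Aᶜ.card) := (oA A).symm ⟨i, hic⟩ with hj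
        have hoj : (oA A j : Fin s) = i := by
          rw [hj]
          have := (oA A).apply_symm_apply ⟨i, hic⟩
          rw [this]
        have hw : w s i = vA A j := by rw [vA, hoj]; rfl
        rw [hw, Polynomial.eval_mul, sign_mul, sign_pA_eval, hsr]
        rw [← hoj]
        apply bsign_mul_beq
        intro h
        exact oA_not_mem A j ((hz _).1 h)
  
end Fiber2

end Stmt6Aux

namespace Stmt6Aux

open scoped Classical

lemma fiber_card {s : ℕ} (k : ℕ) (A : Finset (Fin s)) :
    (Finset.univ.filter fun σ : Fin s → SignType =>
        Mreal k (w s) σ ∧ ∀ i, σ i = 0 ↔ i ∈ A).card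
      = if A.card ≤ k then
          ∑ j ∈ Finset.range (k - A.card + 1), (s - A.card).choose j
        else 0 := by
  classical
  by_cases hAk : A.card ≤ k
  · rw [if_pos hAk]
    have hcompl : (Aᶜ : Finset (Fin s)).card = s - A.card := by
      rw [Finset.card_compl, Fintype.card_fin]
    have hL2 := card_chg_le (Aᶜ : Finset (Fin s)).card (k - A.card)
    rw [Nat.card_eq_fintype_card, Fintype.card_subtype] at hL2
    rw [← hcompl, ← hL2]
    -- bijection via PhiA
    apply Finset.card_bij (fun σ _ => PhiA A σ)
    · intro σ hσ
      simp only [Finset.mem_filter, Finset.mem_univ, true_and] at hσ ⊢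
      exact ((fiber_iff k A σ hσ.2).1 hσ.1).2
    · intro σ hσ σ' hσ' hpp
      simp only [Finset.mem_filter, Finset.mem_univ, true_and] at hσ hσ'
      funext i
      by_cases hi : i ∈ A
      · rw [(hσ.2 i).2 hi, (hσ'.2 i).2 hi]
      · have hic : i ∈ Aᶜ := Finset.mem_compl.2 hi
        set j : Fin (Aᶜ.card) := (oA A).symm ⟨i, hic⟩ with hj
        have hoj : (oA A j : Fin s) = i := by
          rw [hj, (oA A).apply_symm_apply ⟨i, hic⟩]
        have h1 : PhiA A σ j = PhiA A σ' j := by rw [hpp]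
        rw [PhiA, PhiA] at h1
        have h2 := beq_cancel h1
        have hne : σ (oA A j) ≠ 0 := fun h => oA_not_mem A j ((hσ.2 _).1 h)
        have hne' : σ' (oA A j) ≠ 0 := fun h => oA_not_mem A j ((hσ'.2 _).1 h)
        rw [hoj] at h2 hne hne'
        exact signtype_eq_of_decide hne hne' h2
    · intro ρ hρ
      simp only [Finset.mem_filter, Finset.mem_univ, true_and] at hρ
      set σ : Fin s → SignType := fun i =>
        if h : i ∈ Aᶜ then bsign (epsA A ((oA A).symm ⟨i, h⟩)) * bsign (ρ ((oA A).symm ⟨i, h⟩))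
        else 0 with hσdef
      have hz : ∀ i, σ i = 0 ↔ i ∈ A := by
        intro i
        by_cases hi : i ∈ Aᶜ
        · rw [hσdef]
          simp only [dif_pos hi]
          constructor
          · intro h; exact absurd h (bsign_mul_ne_zero _ _)
          · intro h; exact absurd h (Finset.mem_compl.1 hi)
        · rw [hσdef]
          simp only [dif_neg hi]
          have hiA : i ∈ A := by by_contra h; exact hi (Finset.mem_compl.2 h)
          simp [hiA]
      have hphi : PhiA A σ = ρ := by
        funext j
        have hm : ((oA A j : Fin s)) ∈ Aᶜ := (oA A j).2
        have hsymm : (oA A).symm ⟨(oA A j : Fin s), hm⟩ = j := by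
          have : (⟨(oA A j : Fin s), hm⟩ : {x // x ∈ Aᶜ}) = oA A j := Subtype.ext rfl
          rw [this, (oA A).symm_apply_apply]
        rw [PhiA, hσdef]
        simp only [dif_pos hm, hsymm]
        exact beq_bsign_mul _ _
      refine ⟨σ, ?_, hphi⟩
      simp only [Finset.mem_filter, Finset.mem_univ, true_and]
      refine ⟨(fiber_iff k A σ hz).2 ⟨hAk, ?_⟩, hz⟩
      rw [hphi]
      exact hρ
  · rw [if_neg hAk]
    rw [Finset.card_eq_zero, Finset.filter_eq_empty_iff]
    intro σ _
    intro hcon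
    exact hAk ((fiber_iff k A σ hcon.2).1 hcon.1).1

end Stmt6Aux

namespace Stmt6Aux

lemma main_count (k s : ℕ) :
    Nat.card {σ : Fin s → SignType // Mreal k (w s) σ}
      = ∑ i ∈ Finset.range (k + 1), ∑ j ∈ Finset.range (k - i + 1),
          s.choose i * (s - i).choose j := by
  classical
  rw [Nat.card_eq_fintype_card, Fintype.card_subtype]
  rw [Finset.card_eq_sum_card_fiberwise
      (f := fun σ : Fin s → SignType => Finset.univ.filter fun i => σ i = 0)
      (t := (Finset.univ : Finset (Fin s)).powerset)
      (fun σ _ => Finset.mem_powerset.2 (Finset.filter_subset _ _))]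
  have hfib : ∀ A ∈ (Finset.univ : Finset (Fin s)).powerset,
      ((Finset.univ.filter fun σ : Fin s → SignType => Mreal k (w s) σ).filter
        (fun σ => Finset.univ.filter (fun i => σ i = 0) = A)).card
      = if A.card ≤ k then ∑ j ∈ Finset.range (k - A.card + 1), (s - A.card).choose j
        else 0 := by
    intro A _
    rw [Finset.filter_filter]
    rw [← fiber_card k A]
    apply Finset.card_bij (fun σ _ => σ)
    · intro σ hσ
      simp only [Finset.mem_filter, Finset.mem_univ, true_and] at hσ ⊢
      obtain ⟨h1, h2⟩ := hσ
      refine ⟨h1, fun i => ?_⟩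
      rw [← h2]
      simp
    · intro σ σ' _ _ h; exact h
    · intro σ hσ
      simp only [Finset.mem_filter, Finset.mem_univ, true_and] at hσ
      refine ⟨σ, ?_, rfl⟩
      simp only [Finset.mem_filter, Finset.mem_univ, true_and]
      refine ⟨hσ.1, ?_⟩
      ext i
      simp [hσ.2 i]
  rw [Finset.sum_congr rfl hfib]
  have hs : (Finset.univ : Finset (Fin s)).card = s := by simp
  rw [Finset.sum_powerset_apply_card
    (f := fun c => if c ≤ k then ∑ j ∈ Finset.range (k - c + 1), (s - c).choose j else 0), hs]
  -- final sum juggling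
  have hrhs : ∀ i, (∑ j ∈ Finset.range (k - i + 1), s.choose i * (s - i).choose j)
      = s.choose i * ∑ j ∈ Finset.range (k - i + 1), (s - i).choose j := by
    intro i; rw [Finset.mul_sum]
  simp_rw [hrhs, smul_eq_mul]
  set g : ℕ → ℕ := fun i => ∑ j ∈ Finset.range (k - i + 1), (s - i).choose j with hg
  rcases le_total k s with hks | hsk
  · rw [← Finset.sum_subset (Finset.range_subset_range.2 (by omega) :
        Finset.range (k+1) ⊆ Finset.range (s+1))]
    · apply Finset.sum_congr rfl
      intro i hi
      have : i ≤ k := by have := Finset.mem_range.1 hi; omega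
      rw [if_pos this]
    · intro x _ hx
      have : ¬ x ≤ k := by
        intro h
        exact hx (Finset.mem_range.2 (by omega))
      rw [if_neg this, mul_zero]
  · have h1 : ∀ i ∈ Finset.range (s+1),
        s.choose i * (if i ≤ k then g i else 0) = s.choose i * g i := by
      intro i hi
      have := Finset.mem_range.1 hi
      rw [if_pos (by omega)]
    rw [Finset.sum_congr rfl h1]
    apply Finset.sum_subset (Finset.range_subset_range.2 (by omega) :
        Finset.range (s+1) ⊆ Finset.range (k+1))
    intro x _ hx
    have : s < x := by
      by_contra h
      exact hx (Finset.mem_range.2 (by omega))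
    rw [Nat.choose_eq_zero_of_lt this, zero_mul]

end Stmt6Aux

namespace Stmt6Aux

noncomputable def Pfam (k s : ℕ) : Fin s → MvPolynomial (Fin k) ℝ :=
  fun i => MvPolynomial.C (((i:ℕ):ℝ)^k)
    + ∑ j : Fin k, MvPolynomial.C (((i:ℕ):ℝ)^(j:ℕ)) * MvPolynomial.X j

lemma Pfam_totalDegree (k s : ℕ) (i : Fin s) : (Pfam k s i).totalDegree ≤ 1 := by
  refine le_trans (MvPolynomial.totalDegree_add _ _) (max_le ?_ ?_)
  · rw [MvPolynomial.totalDegree_C]; omega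
  · refine le_trans (MvPolynomial.totalDegree_finset_sum _ _) (Finset.sup_le fun j _ => ?_)
    refine le_trans (MvPolynomial.totalDegree_mul _ _) ?_
    rw [MvPolynomial.totalDegree_C, MvPolynomial.totalDegree_X]

lemma Pfam_eval (k s : ℕ) (i : Fin s) (x : Fin k → ℝ) :
    MvPolynomial.eval x (Pfam k s i)
      = ((i:ℕ):ℝ)^k + ∑ j : Fin k, ((i:ℕ):ℝ)^(j:ℕ) * x j := by
  simp [Pfam]

lemma nonempty_iff (k s : ℕ) (σ : Fin s → SignType) :
    (SignRealization (Pfam k s) σ).Nonempty ↔ Mreal k (w s) σ := by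
  constructor
  · rintro ⟨x, hx⟩
    set q : Polynomial ℝ := X^k + ∑ j : Fin k, C (x j) * X^(j:ℕ) with hq
    have hlow : (∑ j : Fin k, C (x j) * X^(j:ℕ)).degree < ((k : ℕ) : WithBot ℕ) := by
      refine lt_of_le_of_lt (Polynomial.degree_sum_le _ _) ?_
      rw [Finset.sup_lt_iff (by exact_mod_cast WithBot.bot_lt_coe k)]
      intro j _
      refine lt_of_le_of_lt (Polynomial.degree_C_mul_X_pow_le _ _) ?_
      exact_mod_cast j.isLt
    have hmon : q.Monic := monic_X_pow_add hlow
    have hdeg : q.natDegree = k := by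
      have h1 : q.degree = (k:ℕ) := by
        rw [hq, Polynomial.degree_add_eq_left_of_degree_lt
          (by rw [Polynomial.degree_X_pow]; exact hlow), Polynomial.degree_X_pow]
      exact Polynomial.natDegree_eq_of_degree_eq_some h1
    refine ⟨q, hmon, hdeg, fun i => ?_⟩
    have heq : q.eval (w s i) = MvPolynomial.eval x (Pfam k s i) := by
      rw [Pfam_eval, hq]
      simp only [Polynomial.eval_add, Polynomial.eval_pow, Polynomial.eval_X,
        Polynomial.eval_finset_sum, Polynomial.eval_mul, Polynomial.eval_C]
      rw [w]
      congr 1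
      apply Finset.sum_congr rfl
      intro j _
      ring
    rw [heq]
    exact hx i
  · rintro ⟨q, hmo, hdeg, hsgn⟩
    refine ⟨fun j : Fin k => q.coeff (j:ℕ), fun i => ?_⟩
    have heq : MvPolynomial.eval (fun j : Fin k => q.coeff (j:ℕ)) (Pfam k s i)
        = q.eval (w s i) := by
      rw [Pfam_eval]
      rw [Polynomial.eval_eq_sum_range' (n := k+1) (by rw [hdeg]; exact Nat.lt_succ_self k) (w s i)]
      rw [Finset.sum_range_succ]
      have hck : q.coeff k = 1 := by
        have := hmo.coeff_natDegree
        rwa [hdeg] at this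
      rw [hck, one_mul]
      rw [add_comm]
      congr 1
      rw [← Fin.sum_univ_eq_sum_range (fun n => q.coeff n * (w s i)^n) k]
      apply Finset.sum_congr rfl
      intro j _
      rw [w]
      ring
    rw [heq]
    exact hsgn i

end Stmt6Aux

/-- For all `k ≥ 1` and `s ≥ 1` there exist `s` polynomials in `ℝ[X₁,…,X_k]`, each of
total degree at most `1`, such that the number of realizable sign conditions equals
`Σ_{i=0}^{k} Σ_{j=0}^{k−i} C(s,i)·C(s−i,j)`. -/
theorem stmt6 (k s : ℕ) (hk : 1 ≤ k) (hs : 1 ≤ s) :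
    ∃ P : Fin s → MvPolynomial (Fin k) ℝ,
      (∀ i, (P i).totalDegree ≤ 1) ∧
      Nat.card {σ : Fin s → SignType // (SignRealization P σ).Nonempty}
        = ∑ i ∈ Finset.range (k + 1), ∑ j ∈ Finset.range (k - i + 1),
            s.choose i * (s - i).choose j := by
  refine ⟨Stmt6Aux.Pfam k s, Stmt6Aux.Pfam_totalDegree k s, ?_⟩
  exact (Nat.card_congr (Equiv.subtypeEquivRight fun σ =>
    Stmt6Aux.nonempty_iff k s σ)).trans (Stmt6Aux.main_count k s)
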